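/- There exists a GIFSpdp for which the extended invariant measure α is not a product measure μ × μ of its (equal) marginals. Specifically, for the GIFSpdp on [0,1] with φ_j(x,y) = x/4 + y/4 + j/2 and p_j = 1/2 (j = 0,1), if α is the unique fixed point of the extended Markov operator and μ its common marginal, then α ≠ μ × μ. -/

import Mathlib

open MeasureTheory Complex Filter Real Topology

noncomputable section

/-- Bundle a 1-bounded continuous function as a `BoundedContinuousFunction`. -/
def bcf (f : ℝ × ℝ → ℝ) (hf : Continuous f) (hb : ∀ p, ‖f p‖ ≤ 1) :
    BoundedContinuousFunction (ℝ × ℝ) ℝ :=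
  BoundedContinuousFunction.ofNormedAddCommGroup f hf 1 hb

@[simp] lemma bcf_apply (f : ℝ × ℝ → ℝ) (hf : Continuous f) (hb : ∀ p, ‖f p‖ ≤ 1)
    (p : ℝ × ℝ) : bcf f hf hb p = f p := rfl

lemma ibd {ν : Measure (ℝ × ℝ)} [IsProbabilityMeasure ν]
    {f : ℝ × ℝ → ℝ} (hf : Continuous f) (hb : ∀ p, ‖f p‖ ≤ 1) :
    Integrable f ν :=
  (bcf f hf hb).integrable ν

/-- characteristic function -/
def psi (ν : Measure ℝ) (t : ℝ) : ℂ := ∫ x, Complex.exp ((t * x : ℝ) * Complex.I) ∂ν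

lemma cont_lin (t s : ℝ) : Continuous (fun p : ℝ × ℝ => t * p.1 + s * p.2) :=
  (continuous_const.mul continuous_fst).add (continuous_const.mul continuous_snd)

/-- For the GIFSpdp φ_j(x,y) = x/4 + y/4 + j/2, p_j = 1/2 on
[0,1], the unique fixed point α of the extended Markov operator is not the
product μ × μ of its (equal) marginals. -/
theorem stmt_19 (α : Measure (ℝ × ℝ)) [IsProbabilityMeasure α]
    (hfix : ∀ g : BoundedContinuousFunction (ℝ × ℝ) ℝ,
      ∫ p, ((1/2) * g (p.2, p.1/4 + p.2/4) + (1/2) * g (p.2, p.1/4 + p.2/4 + 1/2)) ∂α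
        = ∫ p, g p ∂α)
    (huniq : ∀ β : Measure (ℝ × ℝ), IsProbabilityMeasure β →
      (∀ g : BoundedContinuousFunction (ℝ × ℝ) ℝ,
        ∫ p, ((1/2) * g (p.2, p.1/4 + p.2/4) + (1/2) * g (p.2, p.1/4 + p.2/4 + 1/2)) ∂β
          = ∫ p, g p ∂β) → β = α) :
    α ≠ (α.map Prod.fst).prod (α.map Prod.fst) := by
  intro hprod
  haveI hPμ : IsProbabilityMeasure (α.map Prod.fst) :=
    Measure.isProbabilityMeasure_map measurable_fst.aemeasurable
  set μ := α.map Prod.fst with hμ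
  set ψ := psi μ with hψ
  -- basic integrability facts
  have hcosθ : ∀ t s : ℝ, Integrable (fun p : ℝ × ℝ => Real.cos (t * p.1 + s * p.2)) α :=
    fun t s => ibd (Real.continuous_cos.comp (cont_lin t s)) (fun p => by
      simpa using Real.abs_cos_le_one _)
  have hsinθ : ∀ t s : ℝ, Integrable (fun p : ℝ × ℝ => Real.sin (t * p.1 + s * p.2)) α :=
    fun t s => ibd (Real.continuous_sin.comp (cont_lin t s)) (fun p => by
      simpa using Real.abs_sin_le_one _)
  -- the fixed-point equation for trigonometric test functions
  have keycos : ∀ t s : ℝ,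
      (1/2) * (∫ p : ℝ × ℝ, Real.cos ((s/4) * p.1 + (t + s/4) * p.2) ∂α)
        + (1/2) * ((∫ p : ℝ × ℝ, Real.cos ((s/4) * p.1 + (t + s/4) * p.2) ∂α) * Real.cos (s/2)
            - (∫ p : ℝ × ℝ, Real.sin ((s/4) * p.1 + (t + s/4) * p.2) ∂α) * Real.sin (s/2))
      = ∫ p : ℝ × ℝ, Real.cos (t * p.1 + s * p.2) ∂α := by
    intro t s
    have h := hfix (bcf (fun p => Real.cos (t * p.1 + s * p.2))
      (Real.continuous_cos.comp (cont_lin t s)) (fun p => by simpa using Real.abs_cos_le_one _))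
    simp only [bcf_apply] at h
    rw [← h]
    have hrw : ∀ p : ℝ × ℝ,
        (1/2) * Real.cos (t * p.2 + s * (p.1/4 + p.2/4))
          + (1/2) * Real.cos (t * p.2 + s * (p.1/4 + p.2/4 + 1/2))
        = (1/2) * Real.cos ((s/4) * p.1 + (t + s/4) * p.2)
          + (1/2) * (Real.cos ((s/4) * p.1 + (t + s/4) * p.2) * Real.cos (s/2)
              - Real.sin ((s/4) * p.1 + (t + s/4) * p.2) * Real.sin (s/2)) := by
      intro p
      have e1 : t * p.2 + s * (p.1/4 + p.2/4) = (s/4) * p.1 + (t + s/4) * p.2 := by ring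
      have e2 : t * p.2 + s * (p.1/4 + p.2/4 + 1/2)
          = ((s/4) * p.1 + (t + s/4) * p.2) + s/2 := by ring
      rw [e1, e2]
      generalize s / 4 * p.1 + (t + s / 4) * p.2 = X
      rw [Real.cos_add]
    simp only [hrw]
    have i0 : Integrable (fun p : ℝ × ℝ => Real.cos (s/4 * p.1 + (t + s/4) * p.2)) α :=
      hcosθ _ _
    have i0' : Integrable (fun p : ℝ × ℝ => Real.sin (s/4 * p.1 + (t + s/4) * p.2)) α :=
      hsinθ _ _
    have i1 : Integrable (fun p : ℝ × ℝ =>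
        Real.cos (s/4 * p.1 + (t + s/4) * p.2) * Real.cos (s/2)
          - Real.sin (s/4 * p.1 + (t + s/4) * p.2) * Real.sin (s/2)) α :=
      (i0.mul_const _).sub (i0'.mul_const _)
    rw [integral_add (i0.const_mul _) (i1.const_mul _), integral_const_mul, integral_const_mul,
      integral_sub (i0.mul_const _) (i0'.mul_const _), integral_mul_const, integral_mul_const]
  have keysin : ∀ t s : ℝ,
      (1/2) * (∫ p : ℝ × ℝ, Real.sin ((s/4) * p.1 + (t + s/4) * p.2) ∂α)
        + (1/2) * ((∫ p : ℝ × ℝ, Real.sin ((s/4) * p.1 + (t + s/4) * p.2) ∂α) * Real.cos (s/2)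
            + (∫ p : ℝ × ℝ, Real.cos ((s/4) * p.1 + (t + s/4) * p.2) ∂α) * Real.sin (s/2))
      = ∫ p : ℝ × ℝ, Real.sin (t * p.1 + s * p.2) ∂α := by
    intro t s
    have h := hfix (bcf (fun p => Real.sin (t * p.1 + s * p.2))
      (Real.continuous_sin.comp (cont_lin t s)) (fun p => by simpa using Real.abs_sin_le_one _))
    simp only [bcf_apply] at h
    rw [← h]
    have hrw : ∀ p : ℝ × ℝ,
        (1/2) * Real.sin (t * p.2 + s * (p.1/4 + p.2/4))
          + (1/2) * Real.sin (t * p.2 + s * (p.1/4 + p.2/4 + 1/2))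
        = (1/2) * Real.sin ((s/4) * p.1 + (t + s/4) * p.2)
          + (1/2) * (Real.sin ((s/4) * p.1 + (t + s/4) * p.2) * Real.cos (s/2)
              + Real.cos ((s/4) * p.1 + (t + s/4) * p.2) * Real.sin (s/2)) := by
      intro p
      have e1 : t * p.2 + s * (p.1/4 + p.2/4) = (s/4) * p.1 + (t + s/4) * p.2 := by ring
      have e2 : t * p.2 + s * (p.1/4 + p.2/4 + 1/2)
          = ((s/4) * p.1 + (t + s/4) * p.2) + s/2 := by ring
      rw [e1, e2]
      generalize s / 4 * p.1 + (t + s / 4) * p.2 = X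
      rw [Real.sin_add]
    simp only [hrw]
    have i0 : Integrable (fun p : ℝ × ℝ => Real.cos (s/4 * p.1 + (t + s/4) * p.2)) α :=
      hcosθ _ _
    have i0' : Integrable (fun p : ℝ × ℝ => Real.sin (s/4 * p.1 + (t + s/4) * p.2)) α :=
      hsinθ _ _
    have i1 : Integrable (fun p : ℝ × ℝ =>
        Real.sin (s/4 * p.1 + (t + s/4) * p.2) * Real.cos (s/2)
          + Real.cos (s/4 * p.1 + (t + s/4) * p.2) * Real.sin (s/2)) α :=
      (i0'.mul_const _).add (i0.mul_const _)
    rw [integral_add (i0'.const_mul _) (i1.const_mul _), integral_const_mul, integral_const_mul,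
      integral_add (i0'.mul_const _) (i0.mul_const _), integral_mul_const, integral_mul_const]
  -- complex form of the fixed-point equation
  have cexpsplit : ∀ t s : ℝ,
      ∫ p : ℝ × ℝ, Complex.exp ((t * p.1 + s * p.2 : ℝ) * Complex.I) ∂α
        = ((∫ p : ℝ × ℝ, Real.cos (t * p.1 + s * p.2) ∂α : ℝ) : ℂ)
          + ((∫ p : ℝ × ℝ, Real.sin (t * p.1 + s * p.2) ∂α : ℝ) : ℂ) * Complex.I := by
    intro t s
    have : ∀ p : ℝ × ℝ, Complex.exp ((t * p.1 + s * p.2 : ℝ) * Complex.I)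
        = ((Real.cos (t * p.1 + s * p.2) : ℂ)) + ((Real.sin (t * p.1 + s * p.2) : ℂ)) * Complex.I := by
      intro p
      rw [Complex.exp_mul_I, ← Complex.ofReal_cos, ← Complex.ofReal_sin]
    simp only [this]
    have j0 : Integrable (fun p : ℝ × ℝ => ((Real.cos (t * p.1 + s * p.2) : ℂ))) α :=
      (hcosθ t s).ofReal
    have j1 : Integrable (fun p : ℝ × ℝ => ((Real.sin (t * p.1 + s * p.2) : ℂ)) * Complex.I) α :=
      ((hsinθ t s).ofReal).mul_const _
    rw [integral_add j0 j1, integral_mul_const]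
    congr 1
    · exact integral_ofReal
    · congr 1
      exact integral_ofReal
  have key : ∀ t s : ℝ,
      ∫ p : ℝ × ℝ, Complex.exp ((t * p.1 + s * p.2 : ℝ) * Complex.I) ∂α
        = (1 + Complex.exp ((s/2 : ℝ) * Complex.I))/2
            * ∫ p : ℝ × ℝ, Complex.exp (((s/4) * p.1 + (t + s/4) * p.2 : ℝ) * Complex.I) ∂α := by
    intro t s
    rw [cexpsplit, cexpsplit, Complex.exp_mul_I, ← Complex.ofReal_cos, ← Complex.ofReal_sin]
    have h1 := keycos t s
    have h2 := keysin t s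
    have h1c := congrArg (fun x : ℝ => (x : ℂ)) h1
    have h2c := congrArg (fun x : ℝ => (x : ℂ)) h2
    push_cast at h1c h2c
    push_cast
    linear_combination (-1 : ℂ) * h1c - Complex.I * h2c
      - ((∫ p : ℝ × ℝ, Real.sin ((s/4) * p.1 + (t + s/4) * p.2) ∂α : ℝ) : ℂ)
        * Complex.sin ((s : ℂ)/2) / 2 * Complex.I_sq
  -- Fubini : under the product assumption the integrals factor through ψ
  have prodint : ∀ a b : ℝ,
      ∫ p : ℝ × ℝ, Complex.exp ((a * p.1 + b * p.2 : ℝ) * Complex.I) ∂α = ψ a * ψ b := by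
    intro a b
    rw [hprod]
    have : ∀ p : ℝ × ℝ, Complex.exp ((a * p.1 + b * p.2 : ℝ) * Complex.I)
        = Complex.exp ((a * p.1 : ℝ) * Complex.I) * Complex.exp ((b * p.2 : ℝ) * Complex.I) := by
      intro p
      rw [← Complex.exp_add]
      congr 1
      push_cast
      ring
    simp only [this]
    exact integral_prod_mul (fun x => Complex.exp ((a * x : ℝ) * Complex.I))
      (fun y => Complex.exp ((b * y : ℝ) * Complex.I))
  have key2 : ∀ t s : ℝ,
      ψ t * ψ s = (1 + Complex.exp ((s/2 : ℝ) * Complex.I))/2 * (ψ (s/4) * ψ (t + s/4)) := by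
    intro t s
    have := key t s
    rwa [prodint, prodint] at this
  -- ψ 0 = 1
  have ψ0 : ψ 0 = 1 := by
    simp [hψ, psi]
  -- ψ (2π) = 0
  have ψ2π : ψ (2 * π) = 0 := by
    have h := key2 0 (2 * π)
    rw [ψ0, one_mul] at h
    have hc : ((2 * π / 2 : ℝ) : ℂ) = ((π : ℝ) : ℂ) := by
      push_cast
      ring
    rw [hc, Complex.exp_pi_mul_I] at h
    simpa using h
  -- ψ is close to 1 near 0
  have hlim : Tendsto (fun n : ℕ => ψ (2 * π / n)) atTop (𝓝 1) := by
    rw [hψ]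
    simp only [psi]
    have h1 : Tendsto (fun n : ℕ => ∫ x : ℝ, Complex.exp (((2 * π / n) * x : ℝ) * Complex.I) ∂μ)
        atTop (𝓝 (∫ _ : ℝ, (1 : ℂ) ∂μ)) := by
      apply tendsto_integral_of_dominated_convergence (bound := fun _ => (1 : ℝ))
      · intro n
        exact (Complex.continuous_exp.comp
          ((Complex.continuous_ofReal.comp (continuous_const.mul continuous_id)).mul
            continuous_const)).aestronglyMeasurable
      · exact integrable_const 1
      · intro n
        filter_upwards with x
        rw [Complex.norm_exp_ofReal_mul_I]
      · filter_upwards with x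
        have hx : Tendsto (fun n : ℕ => (2 * π / n) * x) atTop (𝓝 0) := by
          have := (tendsto_const_div_atTop_nhds_zero_nat (2 * π)).mul_const x
          simpa using this
        have hx2 : Tendsto (fun n : ℕ => (((2 * π / n) * x : ℝ) : ℂ) * Complex.I) atTop (𝓝 0) := by
          have := ((Complex.continuous_ofReal.tendsto 0).comp hx).mul_const Complex.I
          simpa using this
        have := (Complex.continuous_exp.tendsto 0).comp hx2
        simpa [Function.comp_def] using this
    have h2 : (∫ _ : ℝ, (1 : ℂ) ∂μ) = 1 := by simp
    rw [h2] at h1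
    exact h1
  have hev : ∀ᶠ n : ℕ in atTop, ψ (2 * π / n) ≠ 0 :=
    hlim.eventually_ne one_ne_zero
  obtain ⟨n, hn8, hne⟩ := ((eventually_ge_atTop 8).and hev).exists
  have hπ : (0 : ℝ) < π := Real.pi_pos
  have hn0 : (0 : ℝ) < n := by positivity
  set u := 2 * π / n with hu
  have hu0 : 0 < u := by positivity
  -- the factor is nonzero
  have hcne : (1 + Complex.exp ((4 * u / 2 : ℝ) * Complex.I))/2 ≠ 0 := by
    intro h
    have h1 : Complex.exp ((4 * u / 2 : ℝ) * Complex.I) = -1 := by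
      have h0 : (1 + Complex.exp ((4 * u / 2 : ℝ) * Complex.I)) = 0 := by
        have := h
        field_simp at this
        have hcast : ((4 * u / 2 : ℝ) : ℂ) * Complex.I = 4 * (u : ℂ) * Complex.I / 2 := by
          push_cast
          ring
        rw [hcast] at this ⊢
        linear_combination this
      linear_combination h0
    have hre := congrArg Complex.re h1
    rw [Complex.exp_ofReal_mul_I_re] at hre
    have h2u : 4 * u / 2 = 2 * u := by ring
    have hle : 2 * u ≤ π / 2 := by
      have h8 : (8 : ℝ) ≤ n := by exact_mod_cast hn8
      rw [hu]
      rw [show 2 * (2 * π / (n : ℝ)) = 4 * π / n by ring,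
        div_le_div_iff₀ (by positivity) (by norm_num : (0:ℝ) < 2)]
      nlinarith
    have hge : (0 : ℝ) ≤ 2 * u := by positivity
    have hcos : (0 : ℝ) ≤ Real.cos (4 * u / 2) := by
      rw [h2u]
      exact Real.cos_nonneg_of_mem_Icc ⟨by linarith, hle⟩
    simp only [Complex.neg_re, Complex.one_re] at hre
    linarith
  -- multiplicativity with step u
  have hmul : ∀ t : ℝ, ψ (t + u) = ψ t * ψ u := by
    intro t
    have e1 := key2 t (4 * u)
    have e2 := key2 0 (4 * u)
    rw [ψ0, one_mul, zero_add] at e2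
    have h4 : 4 * u / 4 = u := by ring
    rw [h4] at e1 e2
    rw [e2] at e1
    set c := (1 + Complex.exp ((4 * u / 2 : ℝ) * Complex.I))/2 with hcdef
    have h6 : (c * ψ u) * ψ (t + u) = (c * ψ u) * (ψ t * ψ u) := by
      linear_combination -e1
    exact mul_left_cancel₀ (mul_ne_zero hcne hne) h6
  -- powers
  have hpow : ∀ k : ℕ, ψ (k * u) = ψ u ^ k := by
    intro k
    induction k with
    | zero => simpa using ψ0
    | succ k ih =>
      have hk : ((k + 1 : ℕ) : ℝ) * u = (k : ℝ) * u + u := by push_cast; ring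
      rw [hk, hmul, ih, pow_succ]
  have h2π : (n : ℝ) * u = 2 * π := by
    rw [hu]
    field_simp
  have hfin : ψ (2 * π) ≠ 0 := by
    rw [← h2π, hpow]
    exact pow_ne_zero _ hne
  exact hfin ψ2π
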